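/- For the Ising broadcast process on T(d,h) with fixed d ≥ 2 and ρ ∈ (0,1) satisfying dρ² > 1, the third moment satisfies M_{d,ρ,h}(3)/((dρ)^{3h}) → C_{d,ρ}(3) as h → ∞, where C_{d,ρ}(3) := (1/((dρ)² − 1))·(3·((d−1)²/d)·(dρ²/(dρ² − 1)) + (dρ)²·(1 − 1/d)(1 − 2/d)). -/

import Mathlib

open Finset

noncomputable section

/-- A configuration of the rooted `d`-ary tree of height `h` with values in `S`:
a vertex at level `ℓ ≤ h` is a path from the root, i.e. a function `Fin ℓ → Fin d`,
and the configuration assigns an element of `S` to every vertex. -/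
abbrev TreeConfig (d h : ℕ) (S : Type) := ∀ ℓ : Fin (h + 1), (Fin ℓ.val → Fin d) → S

/-- The value at the root of the tree. -/
def rootOf {d h : ℕ} {S : Type} (σ : TreeConfig d h S) : S :=
  σ ⟨0, Nat.succ_pos h⟩ Fin.elim0

/-- The values at the leaves (level `h`) of the tree, read as a function on root-to-leaf paths. -/
def leavesOf {d h : ℕ} {S : Type} (σ : TreeConfig d h S) : (Fin h → Fin d) → S :=
  σ ⟨h, Nat.lt_succ_self h⟩

/-- Product over all edges of the tree of an edge weight `W (parent value) (child value)`. -/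
def edgeProd {S : Type} (d h : ℕ) (W : S → S → ℝ) (σ : TreeConfig d h S) : ℝ :=
  ∏ ℓ : Fin h, ∏ f : Fin (ℓ.val + 1) → Fin d,
    W (σ ⟨ℓ.val, Nat.lt_succ_of_lt ℓ.isLt⟩ fun i => f i.castSucc)
      (σ ⟨ℓ.val + 1, Nat.succ_lt_succ ℓ.isLt⟩ f)

/-- Probability of a full configuration under the broadcast process with root prior `ν`
and broadcast channel `W`. -/
def broadcastW {S : Type} (d h : ℕ) (ν : S → ℝ) (W : S → S → ℝ) (σ : TreeConfig d h S) : ℝ :=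
  ν (rootOf σ) * edgeProd d h W σ

/-- The real spin value `±1` of a Boolean spin. -/
def spinVal (b : Bool) : ℝ := if b then 1 else -1

/-- The Ising broadcast channel: copy the parent spin with probability `(1+ρ)/2`. -/
def isingEdge (ρ : ℝ) (a b : Bool) : ℝ := if a = b then (1 + ρ) / 2 else (1 - ρ) / 2

/-- Probability of a configuration under the Ising broadcast process with uniform root. -/
def isingW (d h : ℕ) (ρ : ℝ) (σ : TreeConfig d h Bool) : ℝ :=
  broadcastW d h (fun _ => (1 : ℝ) / 2) (isingEdge ρ) σ

/-- Probability of a configuration under the Ising broadcast process with the root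
conditioned to equal `r`. -/
def isingWRooted (d h : ℕ) (ρ : ℝ) (r : Bool) (σ : TreeConfig d h Bool) : ℝ :=
  (if rootOf σ = r then 1 else 0) * edgeProd d h (isingEdge ρ) σ

/-- The sum of the `d^h` leaf spins of a configuration. -/
def leafSum (d h : ℕ) (σ : TreeConfig d h Bool) : ℝ :=
  ∑ f : Fin h → Fin d, spinVal (leavesOf σ f)

/-- Expectation of a function of the configuration under the Ising broadcast process. -/
def isingExp (d h : ℕ) (ρ : ℝ) (g : TreeConfig d h Bool → ℝ) : ℝ :=
  ∑ σ : TreeConfig d h Bool, isingW d h ρ σ * g σ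

/-- `M_{d,ρ,h}(k) = E[(Σ_ℓ X_ℓ)^k | X_root = +1]`. -/
def isingMoment (d h : ℕ) (ρ : ℝ) (k : ℕ) : ℝ :=
  ∑ σ : TreeConfig d h Bool, isingWRooted d h ρ true σ * leafSum d h σ ^ k

/-- Variance of the sum of the leaf spins under the (true) Ising broadcast process. -/
def isingVar (d h : ℕ) (ρ : ℝ) : ℝ :=
  isingExp d h ρ (fun σ => leafSum d h σ ^ 2) - isingExp d h ρ (leafSum d h) ^ 2

/-- Marginal probability of a leaf spin assignment under the Ising broadcast process. -/
def leafW (d w : ℕ) (ρ : ℝ) (y : (Fin w → Fin d) → Bool) : ℝ :=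
  ∑ σ : TreeConfig d w Bool, if leavesOf σ = y then isingW d w ρ σ else 0

/-- Marginal probability of a leaf spin assignment given the root equals `r`. -/
def leafWRooted (d w : ℕ) (ρ : ℝ) (r : Bool) (y : (Fin w → Fin d) → Bool) : ℝ :=
  ∑ σ : TreeConfig d w Bool, if leavesOf σ = y then isingWRooted d w ρ r σ else 0

/-- Posterior mean `E[X_root | X_leaves = y]` of the root spin given the leaves. -/
def rootPostMean (d w : ℕ) (ρ : ℝ) (y : (Fin w → Fin d) → Bool) : ℝ :=
  (∑ σ : TreeConfig d w Bool,
      if leavesOf σ = y then isingW d w ρ σ * spinVal (rootOf σ) else 0) / leafW d w ρ y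

/-- `q_w = E[E[X_root | X_leaves]^2]` for the Ising broadcast process on `T(d,w)`. -/
def qIsing (d w : ℕ) (ρ : ℝ) : ℝ :=
  ∑ y : (Fin w → Fin d) → Bool, leafW d w ρ y * rootPostMean d w ρ y ^ 2

/-- The law `D_m` of the height of the least common ancestor of a uniformly random
adjacent pair of depth-`w` subtrees: `P(D_m = s) = (d-1) d^{m-s} / (d^m - 1)` for `1 ≤ s ≤ m`. -/
def lcaLaw (d m : ℕ) (s : ℕ) : ℝ :=
  if 1 ≤ s ∧ s ≤ m then ((d : ℝ) - 1) * (d : ℝ) ^ (m - s) / ((d : ℝ) ^ m - 1) else 0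

/-- `α = E_{s ∼ D_m}[ρ^{2s}]`. -/
def alphaAR (d m : ℕ) (ρ : ℝ) : ℝ := ∑ s ∈ Finset.Icc 1 m, lcaLaw d m s * ρ ^ (2 * s)

/-- Joint law of the two subtree root spins when their least common ancestor is at
height `s` above them: a pair of uniform `±1` spins with correlation `ρ^{2s}`. -/
def pairRootW (ρ : ℝ) (s : ℕ) (r r' : Bool) : ℝ :=
  (1 + spinVal r * spinVal r' * ρ ^ (2 * s)) / 4

/-- One-step transition of the autoregressive Ising broadcast process: the conditional law
of the next block of `d^w` leaves given that the previous block equals `y`, averaged over a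
least common ancestor height `s ∼ D_m`. -/
def arStep (d w m : ℕ) (ρ : ℝ) (y y' : (Fin w → Fin d) → Bool) : ℝ :=
  ∑ s ∈ Finset.Icc 1 m, lcaLaw d m s *
    ((∑ r : Bool, ∑ r' : Bool,
        pairRootW ρ s r r' * leafWRooted d w ρ r y * leafWRooted d w ρ r' y') / leafW d w ρ y)

/-- Joint probability of the blocks `Y 0, …, Y (n-1)` of the autoregressive Ising
broadcast process with context depth `w`. -/
def arWeight (d w m n : ℕ) (ρ : ℝ) (Y : Fin n → ((Fin w → Fin d) → Bool)) : ℝ :=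
  (if hn : 0 < n then leafW d w ρ (Y ⟨0, hn⟩) else 1) *
    ∏ i : Fin (n - 1),
      arStep d w m ρ (Y ⟨i.val, by have := i.isLt; omega⟩)
        (Y ⟨i.val + 1, by have := i.isLt; omega⟩)

/-- Expectation of a function of the blocks under the autoregressive Ising broadcast process. -/
def arExp (d w m n : ℕ) (ρ : ℝ) (g : (Fin n → ((Fin w → Fin d) → Bool)) → ℝ) : ℝ :=
  ∑ Y : Fin n → ((Fin w → Fin d) → Bool), arWeight d w m n ρ Y * g Y

/-- The block sum `Z_i = Σ_ℓ (Y_i)_ℓ`. -/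
def blockSum (d w : ℕ) (y : (Fin w → Fin d) → Bool) : ℝ :=
  ∑ f : Fin w → Fin d, spinVal (y f)

/-- The total sum `Σ_i Z_i` of all `d^h` generated spins. -/
def arTotal (d w n : ℕ) (Y : Fin n → ((Fin w → Fin d) → Bool)) : ℝ :=
  ∑ i : Fin n, blockSum d w (Y i)

/-- Variance of the total sum of spins generated by the autoregressive Ising broadcast
process with context depth `w` on `T(d,h)`. -/
def arVar (d h w : ℕ) (ρ : ℝ) : ℝ :=
  arExp d w (h - w) (d ^ (h - w)) ρ (fun Y => arTotal d w (d ^ (h - w)) Y ^ 2)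
    - arExp d w (h - w) (d ^ (h - w)) ρ (arTotal d w (d ^ (h - w))) ^ 2

/-- Second moment of the total sum of spins of the autoregressive process. -/
def arSecond (d h w : ℕ) (ρ : ℝ) : ℝ :=
  arExp d w (h - w) (d ^ (h - w)) ρ (fun Y => arTotal d w (d ^ (h - w)) Y ^ 2)

/-- Fourth moment of the total sum of spins of the autoregressive process. -/
def arFourth (d h w : ℕ) (ρ : ℝ) : ℝ :=
  arExp d w (h - w) (d ^ (h - w)) ρ (fun Y => arTotal d w (d ^ (h - w)) Y ^ 4)

/-- `C_{d,ρ}(2) = (1 - 1/d)·dρ²/(dρ² - 1)`. -/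
def C2const (d : ℕ) (ρ : ℝ) : ℝ := (1 - 1 / (d : ℝ)) * ((d : ℝ) * ρ ^ 2) / ((d : ℝ) * ρ ^ 2 - 1)

/-- `α* = Σ_{s ≥ 1} (1 - 1/d)(1/d)^{s-1} ρ^{2s}`. -/
def alphaStar (d : ℕ) (ρ : ℝ) : ℝ :=
  ∑' s : ℕ, (1 - 1 / (d : ℝ)) * (1 / (d : ℝ)) ^ s * ρ ^ (2 * (s + 1))

/-- `A_{d,ρ}(2) = C_{d,ρ}(2) + 2α*/(1 - α* q*)`. -/
def A2const (d : ℕ) (ρ : ℝ) (qstar : ℝ) : ℝ :=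
  C2const d ρ + 2 * alphaStar d ρ / (1 - alphaStar d ρ * qstar)

end

/-- `C_{d,ρ}(3)`. -/
noncomputable def C3const (d : ℕ) (ρ : ℝ) : ℝ :=
  (1 / (((d : ℝ) * ρ) ^ 2 - 1)) *
    (3 * (((d : ℝ) - 1) ^ 2 / (d : ℝ)) * ((d : ℝ) * ρ ^ 2 / ((d : ℝ) * ρ ^ 2 - 1)) +
      ((d : ℝ) * ρ) ^ 2 * (1 - 1 / (d : ℝ)) * (1 - 2 / (d : ℝ)))



noncomputable section Aux9a

def glue9 (d h : ℕ) {S : Type} (r : S) (τ : Fin d → TreeConfig d h S) :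
    TreeConfig d (h + 1) S := fun ℓ =>
  match ℓ with
  | ⟨0, _⟩ => fun _ => r
  | ⟨ℓ' + 1, hl⟩ => fun f => τ (f 0) ⟨ℓ', by omega⟩ (Fin.tail f)

def treeEquiv (d h : ℕ) (S : Type) :
    TreeConfig d (h + 1) S ≃ S × (Fin d → TreeConfig d h S) where
  toFun σ := (rootOf σ, fun c ℓ f => σ ⟨ℓ.val + 1, by omega⟩ (Fin.cons c f))
  invFun p := glue9 d h p.1 p.2
  left_inv σ := by
    funext ℓ f
    match ℓ with
    | ⟨0, hl⟩ =>
      show σ ⟨0, hl⟩ Fin.elim0 = σ ⟨0, hl⟩ f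
      exact congrArg _ (funext fun i => i.elim0)
    | ⟨ℓ' + 1, hl⟩ =>
      show σ ⟨ℓ' + 1, hl⟩ (Fin.cons (f 0) (Fin.tail f)) = σ ⟨ℓ' + 1, hl⟩ f
      rw [Fin.cons_self_tail]
  right_inv p := by
    obtain ⟨r, τ⟩ := p
    refine Prod.ext rfl ?_
    funext c ℓ f
    simp only [glue9, Fin.cons_zero, Fin.tail_cons]

lemma rootOf_glue9 {d h : ℕ} {S : Type} (r : S) (τ : Fin d → TreeConfig d h S) :
    rootOf (glue9 d h r τ) = r := rfl

lemma leavesOf_glue9 {d h : ℕ} {S : Type} (r : S) (τ : Fin d → TreeConfig d h S)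
    (f : Fin (h + 1) → Fin d) :
    leavesOf (glue9 d h r τ) f = leavesOf (τ (f 0)) (Fin.tail f) := rfl

lemma cons_castSucc9 {m : ℕ} {α : Type} (c : α) (f : Fin (m + 1) → α) :
    (fun i : Fin (m + 1) => Fin.cons (α := fun _ => α) c f i.castSucc) =
      Fin.cons c (fun i : Fin m => f i.castSucc) := by
  funext i
  induction i using Fin.cases with
  | zero => simp
  | succ j => rw [← Fin.succ_castSucc]; simp

lemma edgeProd_glue9 {S : Type} (d h : ℕ) (W : S → S → ℝ) (r : S)
    (τ : Fin d → TreeConfig d h S) :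
    edgeProd d (h + 1) W (glue9 d h r τ) =
      (∏ c : Fin d, (W r (rootOf (τ c)) * edgeProd d h W (τ c))) := by
  rw [Finset.prod_mul_distrib]
  unfold edgeProd
  rw [Fin.prod_univ_succ]
  refine congrArg₂ (· * ·) ?_ ?_
  · refine Fintype.prod_equiv (Equiv.funUnique (Fin 1) (Fin d)) _ _ (fun f => ?_)
    simp only [glue9]
    exact congrArg₂ W rfl (congrArg _ (funext fun i => i.elim0))
  · have step : ∀ ℓ : Fin h,
        (∏ f : Fin (ℓ.val + 1 + 1) → Fin d,
          W (glue9 d h r τ ⟨ℓ.val + 1, Nat.lt_succ_of_lt (Nat.succ_lt_succ ℓ.isLt)⟩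
              fun i => f i.castSucc)
            (glue9 d h r τ ⟨ℓ.val + 1 + 1, Nat.succ_lt_succ (Nat.succ_lt_succ ℓ.isLt)⟩ f)) =
        ∏ c : Fin d, ∏ f : Fin (ℓ.val + 1) → Fin d,
          W (τ c ⟨ℓ.val, Nat.lt_succ_of_lt ℓ.isLt⟩ fun i => f i.castSucc)
            (τ c ⟨ℓ.val + 1, Nat.succ_lt_succ ℓ.isLt⟩ f) := by
      intro ℓ
      rw [← (Fin.consEquiv (fun _ => Fin d)).prod_comp, Fintype.prod_prod_type]
      refine Finset.prod_congr rfl fun c _ => Finset.prod_congr rfl fun f _ => ?_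
      simp only [Fin.consEquiv_apply]
      rw [cons_castSucc9]
      simp [glue9, Fin.consEquiv, Fin.tail_cons]
    exact (Finset.prod_congr rfl fun ℓ _ => step ℓ).trans Finset.prod_comm

end Aux9a

lemma sum_pi_succ9 {T : Type} [Fintype T] (n : ℕ) (g : (Fin (n + 1) → T) → ℝ) :
    ∑ τ : Fin (n + 1) → T, g τ = ∑ t : T, ∑ τ : Fin n → T, g (Fin.cons t τ) := by
  rw [← (Fin.consEquiv (fun _ => T)).sum_comp g, Fintype.sum_prod_type]
  rfl

section Indep9
variable {T : Type} [Fintype T] (μ Z : T → ℝ)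

noncomputable def Fm9 (n k : ℕ) : ℝ :=
  ∑ τ : Fin n → T, (∏ c, μ (τ c)) * (∑ c, Z (τ c)) ^ k

noncomputable def Nm9 (k : ℕ) : ℝ := ∑ t, μ t * Z t ^ k

lemma Fm9_succ (n k : ℕ) :
    Fm9 μ Z (n + 1) k = ∑ t : T, ∑ τ : Fin n → T,
      (μ t * ∏ c, μ (τ c)) * (Z t + ∑ c, Z (τ c)) ^ k := by
  unfold Fm9
  rw [sum_pi_succ9]
  refine Finset.sum_congr rfl fun t _ => Finset.sum_congr rfl fun τ _ => ?_
  simp [Fin.prod_univ_succ, Fin.sum_univ_succ]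

lemma Fm9_rec (n k : ℕ) :
    Fm9 μ Z (n + 1) k = ∑ j ∈ Finset.range (k + 1),
      (k.choose j : ℝ) * Nm9 μ Z j * Fm9 μ Z n (k - j) := by
  rw [Fm9_succ]
  have expand : ∀ (t : T) (τ : Fin n → T),
      (μ t * ∏ c, μ (τ c)) * (Z t + ∑ c, Z (τ c)) ^ k =
        ∑ j ∈ Finset.range (k + 1), (k.choose j : ℝ) *
          ((μ t * Z t ^ j) * ((∏ c, μ (τ c)) * (∑ c, Z (τ c)) ^ (k - j))) := by
    intro t τ
    rw [add_pow, Finset.mul_sum]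
    exact Finset.sum_congr rfl fun j hj => by push_cast; ring
  simp_rw [expand]
  have swap1 : ∀ t : T, (∑ τ : Fin n → T, ∑ j ∈ Finset.range (k + 1), (k.choose j : ℝ) *
      ((μ t * Z t ^ j) * ((∏ c, μ (τ c)) * (∑ c, Z (τ c)) ^ (k - j)))) =
      ∑ j ∈ Finset.range (k + 1), ∑ τ : Fin n → T, (k.choose j : ℝ) *
      ((μ t * Z t ^ j) * ((∏ c, μ (τ c)) * (∑ c, Z (τ c)) ^ (k - j))) :=
    fun t => Finset.sum_comm
  simp_rw [swap1]
  rw [Finset.sum_comm]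
  refine Finset.sum_congr rfl fun j _ => ?_
  unfold Nm9 Fm9
  rw [mul_assoc, Finset.sum_mul_sum, Finset.mul_sum]
  refine Finset.sum_congr rfl fun t _ => ?_
  rw [Finset.mul_sum]

lemma Fm9_base (k : ℕ) : Fm9 μ Z 0 k = (0 : ℝ) ^ k := by
  unfold Fm9
  rw [Fintype.sum_unique]
  simp

variable (hμ : ∑ t, μ t = 1)
include hμ

lemma Fm9_zero (n : ℕ) : Fm9 μ Z n 0 = 1 := by
  induction n with
  | zero => simp [Fm9_base]
  | succ n ih =>
      rw [Fm9_rec]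
      simp [Nm9, hμ, ih]

lemma Fm9_one (n : ℕ) : Fm9 μ Z n 1 = n * Nm9 μ Z 1 := by
  induction n with
  | zero => simp [Fm9_base]
  | succ n ih =>
      rw [Fm9_rec]
      rw [Finset.sum_range_succ, Finset.sum_range_succ, Finset.sum_range_zero]
      have h0 : Nm9 μ Z 0 = 1 := by simpa [Nm9] using hμ
      simp only [ih, Fm9_zero μ Z hμ, h0, Nat.choose_self, Nat.choose_zero_right]
      push_cast
      ring

lemma Fm9_two (n : ℕ) :
    Fm9 μ Z n 2 = n * Nm9 μ Z 2 + n * (n - 1) * Nm9 μ Z 1 ^ 2 := by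
  induction n with
  | zero => simp [Fm9_base]
  | succ n ih =>
      rw [Fm9_rec]
      rw [Finset.sum_range_succ, Finset.sum_range_succ, Finset.sum_range_succ,
        Finset.sum_range_zero]
      have h0 : Nm9 μ Z 0 = 1 := by simpa [Nm9] using hμ
      simp only [ih, Fm9_zero μ Z hμ, Fm9_one μ Z hμ, h0]
      norm_num [Nat.choose]
      push_cast
      ring

lemma Fm9_three (n : ℕ) :
    Fm9 μ Z n 3 = n * Nm9 μ Z 3 + 3 * (n * (n - 1)) * Nm9 μ Z 2 * Nm9 μ Z 1
      + n * (n - 1) * (n - 2) * Nm9 μ Z 1 ^ 3 := by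
  induction n with
  | zero => simp [Fm9_base]
  | succ n ih =>
      rw [Fm9_rec]
      rw [Finset.sum_range_succ, Finset.sum_range_succ, Finset.sum_range_succ,
        Finset.sum_range_succ, Finset.sum_range_zero]
      have h0 : Nm9 μ Z 0 = 1 := by simpa [Nm9] using hμ
      simp only [ih, Fm9_zero μ Z hμ, Fm9_one μ Z hμ, Fm9_two μ Z hμ, h0]
      norm_num [Nat.choose]
      push_cast
      ring

end Indep9


noncomputable section Aux9c

def negConfig9 (d h : ℕ) (σ : TreeConfig d h Bool) : TreeConfig d h Bool :=
  fun ℓ f => !(σ ℓ f)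

def zeroEquiv9 (d : ℕ) (S : Type) : TreeConfig d 0 S ≃ S where
  toFun := rootOf
  invFun s := fun _ _ => s
  left_inv σ := by
    funext ℓ f
    match ℓ with
    | ⟨0, hl⟩ =>
      show σ ⟨0, hl⟩ Fin.elim0 = σ ⟨0, hl⟩ f
      exact congrArg _ (funext fun i => i.elim0)
  right_inv s := rfl

def Gm9 (d h : ℕ) (ρ : ℝ) (r : Bool) (k : ℕ) : ℝ :=
  ∑ σ : TreeConfig d h Bool, isingWRooted d h ρ r σ * leafSum d h σ ^ k

lemma Gm9_base (d : ℕ) (ρ : ℝ) (r : Bool) (k : ℕ) : Gm9 d 0 ρ r k = spinVal r ^ k := by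
  unfold Gm9
  rw [← (zeroEquiv9 d Bool).symm.sum_comp
    (fun σ => isingWRooted d 0 ρ r σ * leafSum d 0 σ ^ k)]
  have hls : ∀ b : Bool, leafSum d 0 (fun _ _ => b) = spinVal b := by
    intro b
    unfold leafSum
    rw [Fintype.sum_unique]
    rfl
  have hep : ∀ b : Bool, edgeProd d 0 (isingEdge ρ) ((fun _ _ => b : TreeConfig d 0 Bool)) = 1 := by
    intro b; unfold edgeProd; simp
  rw [Fintype.sum_bool]
  show isingWRooted d 0 ρ r (fun _ _ => true) * leafSum d 0 (fun _ _ => true) ^ k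
      + isingWRooted d 0 ρ r (fun _ _ => false) * leafSum d 0 (fun _ _ => false) ^ k = _
  unfold isingWRooted
  rw [hls, hls, hep, hep]
  have hr1 : rootOf ((fun _ _ => true : TreeConfig d 0 Bool)) = true := rfl
  have hr2 : rootOf ((fun _ _ => false : TreeConfig d 0 Bool)) = false := rfl
  rw [hr1, hr2]
  cases r <;> simp [spinVal]

lemma leafSum_glue9 (d h : ℕ) (s : Bool) (τ : Fin d → TreeConfig d h Bool) :
    leafSum d (h + 1) (glue9 d h s τ) = ∑ c : Fin d, leafSum d h (τ c) := by
  unfold leafSum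
  rw [sum_pi_succ9]
  refine Finset.sum_congr rfl fun c _ => Finset.sum_congr rfl fun f _ => ?_
  rw [leavesOf_glue9]
  simp [Fin.cons_zero, Fin.tail_cons]

lemma Gm9_succ (d h : ℕ) (ρ : ℝ) (r : Bool) (k : ℕ) :
    Gm9 d (h + 1) ρ r k =
      Fm9 (fun σ : TreeConfig d h Bool =>
          isingEdge ρ r (rootOf σ) * edgeProd d h (isingEdge ρ) σ)
        (leafSum d h) d k := by
  unfold Gm9
  rw [← (treeEquiv d h Bool).symm.sum_comp
    (fun σ => isingWRooted d (h + 1) ρ r σ * leafSum d (h + 1) σ ^ k), Fintype.sum_prod_type]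
  have hterm : ∀ (s : Bool) (τ : Fin d → TreeConfig d h Bool),
      isingWRooted d (h + 1) ρ r (glue9 d h s τ) * leafSum d (h + 1) (glue9 d h s τ) ^ k =
        (if s = r then 1 else 0) *
          ((∏ c, isingEdge ρ s (rootOf (τ c)) * edgeProd d h (isingEdge ρ) (τ c)) *
            (∑ c, leafSum d h (τ c)) ^ k) := by
    intro s τ
    unfold isingWRooted
    rw [edgeProd_glue9, leafSum_glue9]
    have : rootOf (glue9 d h s τ) = s := rfl
    rw [this]
    ring
  have hsum : ∀ (s : Bool),
      (∑ τ : Fin d → TreeConfig d h Bool,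
        isingWRooted d (h + 1) ρ r (glue9 d h s τ) * leafSum d (h + 1) (glue9 d h s τ) ^ k) =
      (if s = r then 1 else 0) * Fm9 (fun σ : TreeConfig d h Bool =>
          isingEdge ρ s (rootOf σ) * edgeProd d h (isingEdge ρ) σ) (leafSum d h) d k := by
    intro s
    unfold Fm9
    rw [Finset.mul_sum]
    exact Finset.sum_congr rfl fun τ _ => hterm s τ
  show (∑ s : Bool, ∑ τ : Fin d → TreeConfig d h Bool, _) = _
  rw [Fintype.sum_bool]
  simp only [show ∀ (s : Bool) (τ : Fin d → TreeConfig d h Bool),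
    (treeEquiv d h Bool).symm (s, τ) = glue9 d h s τ from fun _ _ => rfl]
  rw [hsum, hsum]
  cases r <;> simp

lemma spinVal_not9 (b : Bool) : spinVal (!b) = -spinVal b := by
  cases b <;> simp [spinVal]

lemma isingEdge_not9 (ρ : ℝ) (a b : Bool) : isingEdge ρ (!a) (!b) = isingEdge ρ a b := by
  cases a <;> cases b <;> simp [isingEdge]

def negEquiv9 (d h : ℕ) : TreeConfig d h Bool ≃ TreeConfig d h Bool where
  toFun := negConfig9 d h
  invFun := negConfig9 d h
  left_inv σ := by funext ℓ f; simp [negConfig9]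
  right_inv σ := by funext ℓ f; simp [negConfig9]

lemma edgeProd_neg9 (d h : ℕ) (ρ : ℝ) (σ : TreeConfig d h Bool) :
    edgeProd d h (isingEdge ρ) (negConfig9 d h σ) = edgeProd d h (isingEdge ρ) σ := by
  unfold edgeProd negConfig9
  exact Finset.prod_congr rfl fun ℓ _ => Finset.prod_congr rfl fun f _ => isingEdge_not9 ρ _ _

lemma leafSum_neg9 (d h : ℕ) (σ : TreeConfig d h Bool) :
    leafSum d h (negConfig9 d h σ) = -leafSum d h σ := by
  unfold leafSum leavesOf negConfig9
  rw [← Finset.sum_neg_distrib]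
  exact Finset.sum_congr rfl fun f _ => spinVal_not9 _

lemma Gm9_neg (d h : ℕ) (ρ : ℝ) (k : ℕ) :
    Gm9 d h ρ false k = (-1) ^ k * Gm9 d h ρ true k := by
  unfold Gm9
  rw [← (negEquiv9 d h).sum_comp
    (fun σ => isingWRooted d h ρ false σ * leafSum d h σ ^ k), Finset.mul_sum]
  refine Finset.sum_congr rfl fun σ _ => ?_
  show isingWRooted d h ρ false (negConfig9 d h σ) * leafSum d h (negConfig9 d h σ) ^ k = _
  unfold isingWRooted
  rw [edgeProd_neg9, leafSum_neg9]
  have hroot : rootOf (negConfig9 d h σ) = !(rootOf σ) := rfl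
  rw [hroot, neg_pow]
  cases hb : rootOf σ <;> simp <;> ring

lemma Nm9_ising (d h : ℕ) (ρ : ℝ) (r : Bool) (k : ℕ) :
    Nm9 (fun σ : TreeConfig d h Bool =>
        isingEdge ρ r (rootOf σ) * edgeProd d h (isingEdge ρ) σ) (leafSum d h) k =
      ∑ r' : Bool, isingEdge ρ r r' * Gm9 d h ρ r' k := by
  unfold Nm9 Gm9 isingWRooted
  simp_rw [Finset.mul_sum]
  rw [Finset.sum_comm]
  refine Finset.sum_congr rfl fun σ _ => ?_
  rw [Fintype.sum_bool]
  cases hb : rootOf σ <;> simp <;> ring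

lemma isingEdge_sum9 (ρ : ℝ) (r : Bool) : ∑ r' : Bool, isingEdge ρ r r' = 1 := by
  rw [Fintype.sum_bool]
  cases r <;> simp [isingEdge] <;> ring

lemma Gm9_mass (d h : ℕ) (ρ : ℝ) (r : Bool) : Gm9 d h ρ r 0 = 1 := by
  induction h generalizing r with
  | zero => rw [Gm9_base]; simp
  | succ h ih =>
      rw [Gm9_succ]
      have hμ : (∑ σ : TreeConfig d h Bool,
          isingEdge ρ r (rootOf σ) * edgeProd d h (isingEdge ρ) σ) = 1 := by
        have h0 : (∑ σ : TreeConfig d h Bool,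
            isingEdge ρ r (rootOf σ) * edgeProd d h (isingEdge ρ) σ) =
            Nm9 (fun σ : TreeConfig d h Bool =>
              isingEdge ρ r (rootOf σ) * edgeProd d h (isingEdge ρ) σ) (leafSum d h) 0 := by
          unfold Nm9; simp
        rw [h0, Nm9_ising]
        simp_rw [ih]
        simpa using isingEdge_sum9 ρ r
      exact Fm9_zero _ _ hμ d

lemma hmass9 (d h : ℕ) (ρ : ℝ) (r : Bool) :
    (∑ σ : TreeConfig d h Bool,
      isingEdge ρ r (rootOf σ) * edgeProd d h (isingEdge ρ) σ) = 1 := by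
  have h0 : (∑ σ : TreeConfig d h Bool,
      isingEdge ρ r (rootOf σ) * edgeProd d h (isingEdge ρ) σ) =
      Nm9 (fun σ : TreeConfig d h Bool =>
        isingEdge ρ r (rootOf σ) * edgeProd d h (isingEdge ρ) σ) (leafSum d h) 0 := by
    unfold Nm9; simp
  rw [h0, Nm9_ising]
  simp_rw [Gm9_mass]
  simpa using isingEdge_sum9 ρ r

lemma Nm9_true (d h : ℕ) (ρ : ℝ) (k : ℕ) :
    Nm9 (fun σ : TreeConfig d h Bool =>
        isingEdge ρ true (rootOf σ) * edgeProd d h (isingEdge ρ) σ) (leafSum d h) k =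
      ((1 + ρ) / 2 + (1 - ρ) / 2 * (-1) ^ k) * Gm9 d h ρ true k := by
  rw [Nm9_ising, Fintype.sum_bool, Gm9_neg]
  simp [isingEdge]
  ring

end Aux9c


noncomputable section Aux9d

/-- `K = (d-1)ρ²/(dρ²-1)`. -/
def K9 (d : ℕ) (ρ : ℝ) : ℝ := ((d : ℝ) - 1) * ρ ^ 2 / ((d : ℝ) * ρ ^ 2 - 1)

def P9 (d : ℕ) (ρ : ℝ) : ℝ :=
  3 * (d : ℝ) * ((d : ℝ) - 1) * ρ * (1 - K9 d ρ) / ((d : ℝ) ^ 2 * ρ - (d : ℝ) * ρ)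

def Q9 (d : ℕ) (ρ : ℝ) : ℝ :=
  (3 * (d : ℝ) * ((d : ℝ) - 1) * ρ * K9 d ρ
    + (d : ℝ) * ((d : ℝ) - 1) * ((d : ℝ) - 2) * ρ ^ 3) / (((d : ℝ) * ρ) ^ 3 - (d : ℝ) * ρ)

def A9 (d : ℕ) (ρ : ℝ) : ℝ := 1 - P9 d ρ - Q9 d ρ

variable {d : ℕ} {ρ : ℝ}

lemma G1_9 (h : ℕ) : Gm9 d h ρ true 1 = ((d : ℝ) * ρ) ^ h := by
  induction h with
  | zero => rw [Gm9_base]; simp [spinVal]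
  | succ h ih =>
      rw [Gm9_succ, Fm9_one _ _ (hmass9 d h ρ true), Nm9_true, ih]
      norm_num
      ring

lemma G2_9 (hd : 2 ≤ d) (hρ0 : 0 < ρ) (hKS : 1 < (d : ℝ) * ρ ^ 2) (h : ℕ) :
    Gm9 d h ρ true 2 = (1 - K9 d ρ) * (d : ℝ) ^ h + K9 d ρ * ((d : ℝ) * ρ) ^ (2 * h) := by
  have hden : (d : ℝ) * ρ ^ 2 - 1 ≠ 0 := by intro hc; nlinarith
  induction h with
  | zero => rw [Gm9_base]; simp [spinVal]
  | succ h ih =>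
      rw [Gm9_succ, Fm9_two _ _ (hmass9 d h ρ true), Nm9_true, Nm9_true, G1_9, ih]
      norm_num
      unfold K9
      field_simp
      ring

lemma G3_9 (hd : 2 ≤ d) (hρ0 : 0 < ρ) (hρ1 : ρ < 1) (hKS : 1 < (d : ℝ) * ρ ^ 2) (h : ℕ) :
    Gm9 d h ρ true 3 = A9 d ρ * ((d : ℝ) * ρ) ^ h + P9 d ρ * ((d : ℝ) ^ 2 * ρ) ^ h
      + Q9 d ρ * ((d : ℝ) * ρ) ^ (3 * h) := by
  have hD2 : (2 : ℝ) ≤ (d : ℝ) := by exact_mod_cast hd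
  have hden : (d : ℝ) * ρ ^ 2 - 1 ≠ 0 := by intro hc; nlinarith
  have hu : 1 < (d : ℝ) * ρ := by nlinarith
  have hPden : (d : ℝ) ^ 2 * ρ - (d : ℝ) * ρ ≠ 0 := by intro hc; nlinarith
  have hQden : ((d : ℝ) * ρ) ^ 3 - (d : ℝ) * ρ ≠ 0 := by
    intro hc
    have hu0' : (0 : ℝ) < (d : ℝ) * ρ := by nlinarith
    nlinarith [mul_pos (mul_pos hu0' (by linarith : (0 : ℝ) < (d : ℝ) * ρ - 1))
      (by linarith : (0 : ℝ) < (d : ℝ) * ρ + 1)]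
  induction h with
  | zero =>
      rw [Gm9_base]
      simp [spinVal, A9]
      ring
  | succ h ih =>
      rw [Gm9_succ, Fm9_three _ _ (hmass9 d h ρ true), Nm9_true, Nm9_true, Nm9_true,
        G1_9, G2_9 hd hρ0 hKS, ih]
      norm_num
      unfold A9 P9 Q9 K9
      have hd1 : (d : ℝ) - 1 ≠ 0 := by intro hc; nlinarith
      have hdd : (d : ℝ) ^ 2 * ρ ^ 2 - 1 ≠ 0 := by intro hc; nlinarith
      have hd0 : (d : ℝ) ≠ 0 := by intro hc; nlinarith
      have hρne : ρ ≠ 0 := ne_of_gt hρ0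
      field_simp
      ring

end Aux9d

/-- Asymptotics of the third conditional moment of the leaf-spin sum of the
Ising broadcast process above the Kesten–Stigum threshold. -/
theorem statement9 (d : ℕ) (hd : 2 ≤ d) (ρ : ℝ) (hρ0 : 0 < ρ) (hρ1 : ρ < 1)
    (hKS : 1 < (d : ℝ) * ρ ^ 2) :
    Filter.Tendsto (fun h : ℕ => isingMoment d h ρ 3 / ((d : ℝ) * ρ) ^ (3 * h))
      Filter.atTop (nhds (C3const d ρ)) := by
  have hD2 : (2 : ℝ) ≤ (d : ℝ) := by exact_mod_cast hd
  have hu : 1 < (d : ℝ) * ρ := by nlinarith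
  have hu0 : (d : ℝ) * ρ ≠ 0 := by intro hc; nlinarith
  have hd0 : (d : ℝ) ≠ 0 := by intro hc; nlinarith
  have hρne : ρ ≠ 0 := ne_of_gt hρ0
  have key : ∀ h : ℕ, isingMoment d h ρ 3 / ((d : ℝ) * ρ) ^ (3 * h)
      = A9 d ρ * (1 / ((d : ℝ) * ρ) ^ 2) ^ h + P9 d ρ * (1 / ((d : ℝ) * ρ ^ 2)) ^ h
        + Q9 d ρ := by
    intro h
    have hM : isingMoment d h ρ 3 = Gm9 d h ρ true 3 := rfl
    rw [hM, G3_9 hd hρ0 hρ1 hKS h, div_eq_iff (pow_ne_zero _ hu0)]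
    have e1 : (1 / ((d : ℝ) * ρ) ^ 2) ^ h * ((d : ℝ) * ρ) ^ (3 * h) = ((d : ℝ) * ρ) ^ h := by
      rw [pow_mul, ← mul_pow]
      congr 1
      field_simp
    have e2 : (1 / ((d : ℝ) * ρ ^ 2)) ^ h * ((d : ℝ) * ρ) ^ (3 * h)
        = ((d : ℝ) ^ 2 * ρ) ^ h := by
      rw [pow_mul, ← mul_pow]
      congr 1
      have hne : (d : ℝ) * ρ ^ 2 ≠ 0 := by intro hc; nlinarith
      field_simp
    rw [add_mul, add_mul, mul_assoc, mul_assoc, e1, e2]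
  have h1a : (0 : ℝ) ≤ 1 / ((d : ℝ) * ρ) ^ 2 := by positivity
  have h1b : 1 / ((d : ℝ) * ρ) ^ 2 < 1 := by
    rw [div_lt_one (by nlinarith)]
    nlinarith
  have h2a : (0 : ℝ) ≤ 1 / ((d : ℝ) * ρ ^ 2) := by positivity
  have h2b : 1 / ((d : ℝ) * ρ ^ 2) < 1 := by
    rw [div_lt_one (by nlinarith)]
    nlinarith
  have t1 := tendsto_pow_atTop_nhds_zero_of_lt_one h1a h1b
  have t2 := tendsto_pow_atTop_nhds_zero_of_lt_one h2a h2b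
  have T := ((t1.const_mul (A9 d ρ)).add (t2.const_mul (P9 d ρ))).add
    (tendsto_const_nhds (x := Q9 d ρ) (f := Filter.atTop (α := ℕ)))
  have hfun : (fun h : ℕ => isingMoment d h ρ 3 / ((d : ℝ) * ρ) ^ (3 * h))
      = fun h : ℕ => A9 d ρ * (1 / ((d : ℝ) * ρ) ^ 2) ^ h
        + P9 d ρ * (1 / ((d : ℝ) * ρ ^ 2)) ^ h + Q9 d ρ := funext key
  have hQ : Q9 d ρ = C3const d ρ := by
    unfold Q9 K9 C3const
    have hden : (d : ℝ) * ρ ^ 2 - 1 ≠ 0 := by intro hc; nlinarith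
    have hQden : ((d : ℝ) * ρ) ^ 3 - (d : ℝ) * ρ ≠ 0 := by
      intro hc
      have hu0' : (0 : ℝ) < (d : ℝ) * ρ := by nlinarith
      nlinarith [mul_pos (mul_pos hu0' (by linarith : (0 : ℝ) < (d : ℝ) * ρ - 1))
        (by linarith : (0 : ℝ) < (d : ℝ) * ρ + 1)]
    have huu : ((d : ℝ) * ρ) ^ 2 - 1 ≠ 0 := by intro hc; nlinarith
    field_simp
  rw [hfun, ← hQ]
  simpa using T
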